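/- Let X, Y₀, Y₁, Y be Banach spaces with continuous dense injections Y₁ ⊆ Y ⊆ Y₀, and suppose there exist θ ∈ (0,1) and C > 0 such that ‖y‖_Y ≤ C‖y‖_{Y₀}^θ ‖y‖_{Y₁}^{1−θ} for all y ∈ Y₁. Then for any family T of operators belonging to both L(X,Y₀) and L(X,Y₁), the R-bound in L(X,Y) satisfies R_{L(X,Y)}(T) ≤ C · R_{L(X,Y₀)}(T)^θ · R_{L(X,Y₁)}(T)^{1−θ}. -/

import Mathlib

open scoped BigOperators

noncomputable section

lemma holder_interp_sum {ι : Type*} (s : Finset ι) (a b c : ι → ℝ)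
    (ha : ∀ i, 0 ≤ a i) (hb : ∀ i, 0 ≤ b i) (hc : ∀ i, 0 ≤ c i)
    {θ p : ℝ} (hθ0 : 0 < θ) (hθ1 : θ < 1) (hp : 0 < p)
    {C B D : ℝ} (hC : 0 ≤ C) (hB : 0 ≤ B) (hD : 0 ≤ D)
    (h : ∀ i ∈ s, a i ≤ C * b i ^ θ * c i ^ (1 - θ))
    (hB' : (∑ i ∈ s, b i ^ p) ^ (1/p) ≤ B)
    (hD' : (∑ i ∈ s, c i ^ p) ^ (1/p) ≤ D) :
    (∑ i ∈ s, a i ^ p) ^ (1/p) ≤ C * B ^ θ * D ^ (1 - θ) := by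
  have hθ1' : 0 < 1 - θ := by linarith
  have hSb : 0 ≤ ∑ i ∈ s, b i ^ p := Finset.sum_nonneg fun i _ => Real.rpow_nonneg (hb i) p
  have hSc : 0 ≤ ∑ i ∈ s, c i ^ p := Finset.sum_nonneg fun i _ => Real.rpow_nonneg (hc i) p
  have step1 : ∑ i ∈ s, a i ^ p ≤
      ∑ i ∈ s, C ^ p * ((b i ^ p) ^ θ * (c i ^ p) ^ (1 - θ)) := by
    refine Finset.sum_le_sum fun i hi => ?_
    have h1 : a i ^ p ≤ (C * b i ^ θ * c i ^ (1 - θ)) ^ p :=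
      Real.rpow_le_rpow (ha i) (h i hi) hp.le
    refine h1.trans_eq ?_
    rw [Real.mul_rpow (mul_nonneg hC (Real.rpow_nonneg (hb i) θ)) (Real.rpow_nonneg (hc i) _), Real.mul_rpow hC (Real.rpow_nonneg (hb i) θ),
      ← Real.rpow_mul (hb i), ← Real.rpow_mul (hc i), mul_comm θ p, mul_comm (1-θ) p,
      Real.rpow_mul (hb i), Real.rpow_mul (hc i), mul_assoc]
  have step2 : ∑ i ∈ s, (b i ^ p) ^ θ * (c i ^ p) ^ (1 - θ) ≤
      (∑ i ∈ s, b i ^ p) ^ θ * (∑ i ∈ s, c i ^ p) ^ (1 - θ) := by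
    have hpq : Real.HolderConjugate (1/θ) (1/(1-θ)) := by
      refine Real.holderConjugate_iff.mpr ⟨?_, ?_⟩
      · rw [lt_div_iff₀ hθ0]; linarith
      · rw [one_div, one_div, inv_inv, inv_inv]; ring
    have := Real.inner_le_Lp_mul_Lq s (fun i => (b i ^ p) ^ θ)
      (fun i => (c i ^ p) ^ (1 - θ)) hpq
    refine this.trans_eq ?_
    rw [one_div_one_div, one_div_one_div]
    congr 1
    · congr 1
      refine Finset.sum_congr rfl fun i _ => ?_
      rw [abs_of_nonneg (Real.rpow_nonneg (Real.rpow_nonneg (hb i) p) θ), ← Real.rpow_mul (Real.rpow_nonneg (hb i) p),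
        mul_one_div_cancel hθ0.ne', Real.rpow_one]
    · congr 1
      refine Finset.sum_congr rfl fun i _ => ?_
      rw [abs_of_nonneg (Real.rpow_nonneg (Real.rpow_nonneg (hc i) p) _), ← Real.rpow_mul (Real.rpow_nonneg (hc i) p),
        mul_one_div_cancel hθ1'.ne', Real.rpow_one]
  have key : ∑ i ∈ s, a i ^ p ≤
      C ^ p * ((∑ i ∈ s, b i ^ p) ^ θ * (∑ i ∈ s, c i ^ p) ^ (1 - θ)) := by
    calc ∑ i ∈ s, a i ^ p ≤ _ := step1
    _ = C ^ p * ∑ i ∈ s, (b i ^ p) ^ θ * (c i ^ p) ^ (1 - θ) := by rw [Finset.mul_sum]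
    _ ≤ _ := by
        exact mul_le_mul_of_nonneg_left step2 (Real.rpow_nonneg hC p)
  have hfin : (∑ i ∈ s, a i ^ p) ^ (1/p) ≤
      C * ((∑ i ∈ s, b i ^ p) ^ (1/p)) ^ θ * ((∑ i ∈ s, c i ^ p) ^ (1/p)) ^ (1 - θ) := by
    have h2 := Real.rpow_le_rpow (Finset.sum_nonneg fun i _ => Real.rpow_nonneg (ha i) p)
      key (by positivity : (0:ℝ) ≤ 1/p)
    refine h2.trans_eq ?_
    rw [Real.mul_rpow (by positivity) (by positivity),
      Real.mul_rpow (by positivity) (by positivity),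
      ← Real.rpow_mul hC, mul_one_div_cancel hp.ne', Real.rpow_one,
      ← Real.rpow_mul hSb, ← Real.rpow_mul hSc, mul_comm θ (1/p), mul_comm (1-θ) (1/p),
      Real.rpow_mul hSb, Real.rpow_mul hSc, mul_assoc]
  refine hfin.trans ?_
  have hb1 : ((∑ i ∈ s, b i ^ p) ^ (1/p)) ^ θ ≤ B ^ θ :=
    Real.rpow_le_rpow (by positivity) hB' hθ0.le
  have hc1 : ((∑ i ∈ s, c i ^ p) ^ (1/p)) ^ (1-θ) ≤ D ^ (1-θ) :=
    Real.rpow_le_rpow (by positivity) hD' hθ1'.le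
  have := mul_le_mul (mul_le_mul_of_nonneg_left hb1 hC) hc1 (by positivity) (by positivity)
  linarith


/-- The random sign (Rademacher variable) attached to a boolean vector `z` at coordinate `j`. -/
def radSign {N : ℕ} (z : Fin N → Bool) (j : Fin N) : ℝ := if z j then 1 else -1

/-- Discrete (Rademacher) formulation of `R`-boundedness of an indexed family of operators
with constant `C` (Definition of Denk–Seiler; equivalent to the probabilistic one). -/
def RBoundedFamWith {X Y : Type*} [NormedAddCommGroup X] [NormedSpace ℂ X]
    [NormedAddCommGroup Y] [NormedSpace ℂ Y] {ι : Type*}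
    (p : ℝ) (T : ι → (X →L[ℂ] Y)) (C : ℝ) : Prop :=
  ∀ (N : ℕ) (f : Fin N → ι) (x : Fin N → X),
    (∑ z : Fin N → Bool, ‖∑ j, radSign z j • (T (f j)) (x j)‖ ^ p) ^ (1 / p) ≤
      C * (∑ z : Fin N → Bool, ‖∑ j, radSign z j • x j‖ ^ p) ^ (1 / p)

/-- interpolation of `R`-bounds. `Y₁ ⊆ Y ⊆ Y₀` are Banach spaces with continuous
dense injections (`i₁ : Y₁ → Y`, `i₀ : Y → Y₀`) satisfying an interpolation inequality; a family
of operators bounded into both `Y₀` and `Y₁` is `R`-bounded into `Y` with interpolated bound. -/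
theorem rBounded_interpolation {X Y₀ Y₁ Ymid : Type*}
    [NormedAddCommGroup X] [NormedSpace ℂ X] [CompleteSpace X]
    [NormedAddCommGroup Y₀] [NormedSpace ℂ Y₀] [CompleteSpace Y₀]
    [NormedAddCommGroup Y₁] [NormedSpace ℂ Y₁] [CompleteSpace Y₁]
    [NormedAddCommGroup Ymid] [NormedSpace ℂ Ymid] [CompleteSpace Ymid]
    (i₁ : Y₁ →L[ℂ] Ymid) (i₀ : Ymid →L[ℂ] Y₀)
    (hi₁ : Function.Injective i₁) (hi₀ : Function.Injective i₀)
    (hd₁ : DenseRange i₁) (hd₀ : DenseRange i₀)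
    (θ C : ℝ) (hθ : θ ∈ Set.Ioo (0:ℝ) 1) (hC : 0 < C)
    (hinterp : ∀ y : Y₁, ‖i₁ y‖ ≤ C * ‖i₀ (i₁ y)‖ ^ θ * ‖y‖ ^ (1 - θ))
    {ι : Type*} (T : ι → (X →L[ℂ] Y₁)) (p C₀ C₁ : ℝ) (hp : 1 ≤ p)
    (hC₀ : 0 ≤ C₀) (hC₁ : 0 ≤ C₁)
    (h₀ : RBoundedFamWith p (fun i => i₀.comp (i₁.comp (T i))) C₀)
    (h₁ : RBoundedFamWith p T C₁) :
    RBoundedFamWith p (fun i => i₁.comp (T i)) (C * C₀ ^ θ * C₁ ^ (1 - θ)) := by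
  intro N f x
  obtain ⟨hθ0, hθ1⟩ := hθ
  have hp0 : (0:ℝ) < p := lt_of_lt_of_le one_pos hp
  set K := (∑ z : Fin N → Bool, ‖∑ j, radSign z j • x j‖ ^ p) ^ (1 / p) with hKdef
  have hK0 : 0 ≤ K :=
    Real.rpow_nonneg (Finset.sum_nonneg fun z _ => Real.rpow_nonneg (norm_nonneg _) p) _
  have eq1 : ∀ z : Fin N → Bool,
      ∑ j, radSign z j • (i₁.comp (T (f j))) (x j) =
        i₁ (∑ j, radSign z j • (T (f j)) (x j)) := by
    intro z
    rw [map_sum]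
    exact Finset.sum_congr rfl fun j _ => (i₁.map_smul_of_tower _ _).symm
  have eq0 : ∀ z : Fin N → Bool,
      ∑ j, radSign z j • (i₀.comp (i₁.comp (T (f j)))) (x j) =
        i₀ (i₁ (∑ j, radSign z j • (T (f j)) (x j))) := by
    intro z
    rw [map_sum, map_sum]
    refine Finset.sum_congr rfl fun j _ => ?_
    rw [i₁.map_smul_of_tower, i₀.map_smul_of_tower]
    rfl
  have key := holder_interp_sum (Finset.univ : Finset (Fin N → Bool))
    (fun z => ‖∑ j, radSign z j • (i₁.comp (T (f j))) (x j)‖)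
    (fun z => ‖∑ j, radSign z j • (i₀.comp (i₁.comp (T (f j)))) (x j)‖)
    (fun z => ‖∑ j, radSign z j • (T (f j)) (x j)‖)
    (fun z => norm_nonneg _) (fun z => norm_nonneg _) (fun z => norm_nonneg _)
    hθ0 hθ1 hp0 hC.le (mul_nonneg hC₀ hK0) (mul_nonneg hC₁ hK0)
    (fun z _ => by simp only [eq1 z, eq0 z]; exact hinterp _)
    (h₀ N f x) (h₁ N f x)
  refine key.trans_eq ?_
  rw [Real.mul_rpow hC₀ hK0, Real.mul_rpow hC₁ hK0]
  have : K ^ θ * K ^ (1 - θ) = K := by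
    rw [← Real.rpow_add' hK0 (by norm_num), add_sub_cancel, Real.rpow_one]
  calc C * (C₀ ^ θ * K ^ θ) * (C₁ ^ (1 - θ) * K ^ (1 - θ))
      = C * C₀ ^ θ * C₁ ^ (1 - θ) * (K ^ θ * K ^ (1 - θ)) := by ring
    _ = C * C₀ ^ θ * C₁ ^ (1 - θ) * K := by rw [this]
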